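/- Let V be a Hausdorff real topological vector space, A ⊆ V a closed affine subset, F ⊆ A a closed convex subset, and N ⊆ A a compact subset. Then the robustness function R_{F,N} : A → [0,∞] is lower semicontinuous on A. -/

import Mathlib

open scoped ENNReal NNReal

/-- The robustness `R_{F,N}(x)`: the infimum of those `r ≥ 0` such that
`(1/(1+r)) • (x + r • y) ∈ F` for some `y ∈ N`, with `inf ∅ = ∞`. -/
noncomputable def Rob {V : Type*} [AddCommGroup V] [Module ℝ V]
    (F N : Set V) (x : V) : ℝ≥0∞ :=
  ⨅ r ∈ {r : ℝ≥0 | ∃ y ∈ N, (1 + (r : ℝ))⁻¹ • (x + (r : ℝ) • y) ∈ F}, (r : ℝ≥0∞)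

/-- Lower semicontinuity of the robustness on a closed affine set `A` when `F` is
closed convex and `N` is compact. -/
theorem rob_lowerSemicontinuous {V : Type*} [AddCommGroup V] [Module ℝ V]
    [TopologicalSpace V] [IsTopologicalAddGroup V] [ContinuousSMul ℝ V] [T2Space V]
    (A F N : Set V)
    (hA : ∀ x ∈ A, ∀ y ∈ A, ∀ l : ℝ, l • x + (1 - l) • y ∈ A) (hAc : IsClosed A)
    (hFA : F ⊆ A) (hF : Convex ℝ F) (hFc : IsClosed F)
    (hNA : N ⊆ A) (hNcomp : IsCompact N) :
    LowerSemicontinuousOn (fun x => Rob F N x) A := by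
  intro x hx c hc
  obtain ⟨c', hcc', hc'⟩ := exists_between hc
  have hc'top : c' ≠ ⊤ := (lt_of_lt_of_le hc' le_top).ne
  set b : ℝ≥0 := c'.toNNReal with hb
  have hbc' : (b : ℝ≥0∞) = c' := ENNReal.coe_toNNReal hc'top
  set K : Set (ℝ≥0 × V) := Set.Icc 0 b ×ˢ N with hK
  have hKcomp : IsCompact K := isCompact_Icc.prod hNcomp
  haveI : CompactSpace K := isCompact_iff_compactSpace.mp hKcomp
  set T : Set V := {z : V | ∃ r : ℝ≥0, r ≤ b ∧
      ∃ y ∈ N, (1 + (r : ℝ))⁻¹ • (z + (r : ℝ) • y) ∈ F} with hT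
  -- continuity of the key map on K × V
  have hf : Continuous (fun q : K × V =>
      (1 + ((q.1 : ℝ≥0 × V).1 : ℝ))⁻¹ • (q.2 + ((q.1 : ℝ≥0 × V).1 : ℝ) • (q.1 : ℝ≥0 × V).2)) := by
    have hr : Continuous (fun q : K × V => ((q.1 : ℝ≥0 × V).1 : ℝ)) :=
      NNReal.continuous_coe.comp ((continuous_fst.comp (continuous_subtype_val.comp continuous_fst)))
    have hy : Continuous (fun q : K × V => (q.1 : ℝ≥0 × V).2) :=
      continuous_snd.comp (continuous_subtype_val.comp continuous_fst)
    have hinv : Continuous (fun q : K × V => (1 + ((q.1 : ℝ≥0 × V).1 : ℝ))⁻¹) := by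
      refine Continuous.inv₀ (by continuity) fun q => ?_
      have : (0:ℝ) < 1 + ((q.1 : ℝ≥0 × V).1 : ℝ) := by positivity
      exact this.ne'
    exact hinv.smul (continuous_snd.add (hr.smul hy))
  have hTclosed : IsClosed T := by
    have himg : T = Prod.snd '' {q : K × V |
        (1 + ((q.1 : ℝ≥0 × V).1 : ℝ))⁻¹ • (q.2 + ((q.1 : ℝ≥0 × V).1 : ℝ) • (q.1 : ℝ≥0 × V).2) ∈ F} := by
      ext z
      constructor
      · rintro ⟨r, hrb, y, hyN, hmem⟩
        exact ⟨(⟨(r, y), ⟨⟨zero_le, hrb⟩, hyN⟩⟩, z), hmem, rfl⟩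
      · rintro ⟨⟨⟨⟨r, y⟩, ⟨⟨_, hrb⟩, hyN⟩⟩, z'⟩, hmem, rfl⟩
        exact ⟨r, hrb, y, hyN, hmem⟩
    rw [himg]
    exact isClosedMap_snd_of_compactSpace _ (hFc.preimage hf)
  have hxT : x ∉ T := by
    rintro ⟨r, hrb, y, hyN, hmem⟩
    have : Rob F N x ≤ (r : ℝ≥0∞) := iInf₂_le r ⟨y, hyN, hmem⟩
    have : Rob F N x ≤ c' := this.trans (by rw [← hbc']; exact_mod_cast hrb)
    exact absurd hc' this.not_gt
  have hev : ∀ᶠ z in nhds x, z ∉ T := hTclosed.isOpen_compl.eventually_mem hxT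
  filter_upwards [nhdsWithin_le_nhds hev] with z hzT
  refine lt_of_lt_of_le hcc' ?_
  refine le_iInf₂ fun r hr => ?_
  rcases hr with ⟨y, hyN, hmem⟩
  by_contra hlt
  push_neg at hlt
  have hrb : r ≤ b := by
    rw [← hbc'] at hlt
    exact_mod_cast hlt.le
  exact hzT ⟨r, hrb, y, hyN, hmem⟩
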